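/- Let m ∈ ℕ and let g be holomorphic on the unit disc 𝔻 with g(e^{2πi/m} z) = g(z) for all z ∈ 𝔻. If g extends holomorphically across a point b ∈ ∂𝔻 (i.e., there exist an open neighborhood V of b and a holomorphic h on V with h = g on V ∩ 𝔻), then g extends holomorphically across e^{2πi/m} b. Consequently, if g fails to extend holomorphically across at least one point of ∂𝔻, then every closed arc of ∂𝔻 of length greater than 2π/m contains a point across which g does not extend. -/

import Mathlib

open Complex Metric MeasureTheory Filter Set

/-- The circle mean of an `EReal`-valued function `u` over the circle of
center `z` and radius `r`, defined as the decreasing limit of the means of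
the truncations `max u (-n)`. -/
noncomputable def circleMeanE (u : ℂ → EReal) (z : ℂ) (r : ℝ) : EReal :=
  ⨅ n : ℕ, (((1 / (2 * Real.pi)) * ∫ θ in (0:ℝ)..(2 * Real.pi),
    (max (u (z + r * Complex.exp (θ * Complex.I))) ((-(n:ℝ) : ℝ) : EReal)).toReal : ℝ) : EReal)

/-- `u` is subharmonic on `U`: upper semicontinuous and satisfying the
sub-mean value inequality on every closed disc contained in `U`. -/
def SubharmonicOn (u : ℂ → EReal) (U : Set ℂ) : Prop :=
  UpperSemicontinuousOn u U ∧
  ∀ z ∈ U, ∀ r : ℝ, 0 < r → closedBall z r ⊆ U → u z ≤ circleMeanE u z r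

/-- `u` is plurisubharmonic on `Ω`: upper semicontinuous, not identically
`-∞` on any connected component, and subharmonic on every complex line. -/
def PlurisubharmonicOn {E : Type*} [NormedAddCommGroup E] [NormedSpace ℂ E]
    (u : E → EReal) (Ω : Set E) : Prop :=
  UpperSemicontinuousOn u Ω ∧
  (∀ z ∈ Ω, ∃ w ∈ connectedComponentIn Ω z, u w ≠ ⊥) ∧
  ∀ a b : E, SubharmonicOn (fun t : ℂ => u (a + t • b)) {t : ℂ | a + t • b ∈ Ω}

/-- `S` is complete pluripolar in `Ω` if there is a plurisubharmonic function
on `Ω` whose `-∞`-set is exactly `S`. -/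
def CompletePluripolarIn {E : Type*} [NormedAddCommGroup E] [NormedSpace ℂ E]
    (S Ω : Set E) : Prop :=
  ∃ u : E → EReal, PlurisubharmonicOn u Ω ∧ {z ∈ Ω | u z = ⊥} = S

/-- The pluripolar hull of `K` in `Ω`. -/
def pluripolarHull {E : Type*} [NormedAddCommGroup E] [NormedSpace ℂ E]
    (K Ω : Set E) : Set E :=
  {z ∈ Ω | ∀ u : E → EReal, PlurisubharmonicOn u Ω → (∀ w ∈ K, u w = ⊥) → u z = ⊥}

/-- Harmonic measure of `S ⊆ ∂G` for the domain `G` at the point `z`,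
via the Perron method. -/
noncomputable def harmonicMeasure (z : ℂ) (S G : Set ℂ) : EReal :=
  sSup {t : EReal | ∃ v : ℂ → EReal, SubharmonicOn v G ∧ (∀ w ∈ G, v w ≤ 0) ∧
    (∀ ζ ∈ frontier G \ S, Filter.limsup v (nhdsWithin ζ G) ≤ -1) ∧ t = v z} + 1

/-- `f`, holomorphic on `D`, extends holomorphically across the boundary
point `b` if there are an open neighborhood `V` of `b` and a holomorphic `g`
on `V` agreeing with `f` on some connected component of `V ∩ D`. -/
def ExtendsAcross (f : ℂ → ℂ) (D : Set ℂ) (b : ℂ) : Prop :=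
  ∃ V : Set ℂ, IsOpen V ∧ b ∈ V ∧ ∃ g : ℂ → ℂ, DifferentiableOn ℂ g V ∧
    ∃ z ∈ V ∩ D, Set.EqOn f g (connectedComponentIn (V ∩ D) z)

/-- The radius of convergence of the power series with coefficients `d`. -/
noncomputable def radiusOfConvergence (d : ℕ → ℂ) : ENNReal :=
  ⨆ (r : NNReal) (_ : ∃ C : ℝ, ∀ n : ℕ, ‖d n‖ * (r : ℝ) ^ n ≤ C), (r : ENNReal)
/-- A rotation-invariant holomorphic function on `𝔻` that
extends across `b ∈ ∂𝔻` also extends across the rotated point; hence if it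
fails to extend somewhere, every closed arc of length `> 2π/m` contains a
point across which it does not extend. -/
theorem rotation_invariant_extension
    (m : ℕ) (hm : 0 < m) (g : ℂ → ℂ)
    (hg : DifferentiableOn ℂ g (ball (0:ℂ) 1))
    (hrot : ∀ z ∈ ball (0:ℂ) 1,
      g (Complex.exp ((2 * Real.pi / (m:ℝ) : ℝ) * Complex.I) * z) = g z) :
    (∀ b ∈ sphere (0:ℂ) 1, ExtendsAcross g (ball (0:ℂ) 1) b →
      ExtendsAcross g (ball (0:ℂ) 1)
        (Complex.exp ((2 * Real.pi / (m:ℝ) : ℝ) * Complex.I) * b)) ∧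
    ((∃ b ∈ sphere (0:ℂ) 1, ¬ ExtendsAcross g (ball (0:ℂ) 1) b) →
      ∀ α β : ℝ, 2 * Real.pi / (m:ℝ) < β - α →
        ∃ θ ∈ Set.Icc α β,
          ¬ ExtendsAcross g (ball (0:ℂ) 1) (Complex.exp ((θ:ℝ) * Complex.I))) := by
  set ω : ℂ := Complex.exp (((2 * Real.pi / (m:ℝ) : ℝ) : ℂ) * Complex.I) with hωdef
  have hωabs : ‖ω‖ = 1 := Complex.norm_exp_ofReal_mul_I _
  have hω0 : ω ≠ 0 := Complex.exp_ne_zero _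
  have key : ∀ b ∈ sphere (0:ℂ) 1, ExtendsAcross g (ball (0:ℂ) 1) b →
      ExtendsAcross g (ball (0:ℂ) 1) (ω * b) := by
    rintro b hb ⟨V, hVopen, hbV, h, hh, z₀, hz₀, heq⟩
    have hcont : Continuous (fun z : ℂ => ω⁻¹ * z) := continuous_const.mul continuous_id
    have hdiff : Differentiable ℂ (fun z : ℂ => ω⁻¹ * z) :=
      (differentiable_const _).mul differentiable_id
    refine ⟨(fun z : ℂ => ω⁻¹ * z) ⁻¹' V, hVopen.preimage hcont, ?_,
      fun z => h (ω⁻¹ * z), ?_, ω * z₀, ?_, ?_⟩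
    · simp only [Set.mem_preimage, inv_mul_cancel_left₀ hω0]
      exact hbV
    · exact hh.comp hdiff.differentiableOn (fun z hz => hz)
    · constructor
      · simp only [Set.mem_preimage, inv_mul_cancel_left₀ hω0]
        exact hz₀.1
      · have h2 := hz₀.2
        simp only [mem_ball, dist_zero_right, norm_mul, hωabs,
          one_mul] at h2 ⊢
        exact h2
    · set V' := (fun z : ℂ => ω⁻¹ * z) ⁻¹' V with hV'
      have habsinv : ‖ω⁻¹‖ = 1 := by rw [norm_inv, hωabs, inv_one]
      have hmaps : ∀ z ∈ V' ∩ ball (0:ℂ) 1, ω⁻¹ * z ∈ V ∩ ball (0:ℂ) 1 := by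
        rintro z ⟨h1, h2⟩
        refine ⟨h1, ?_⟩
        simp only [mem_ball, dist_zero_right, norm_mul, habsinv,
          one_mul] at h2 ⊢
        exact h2
      have hmem : ω * z₀ ∈ V' ∩ ball (0:ℂ) 1 := by
        constructor
        · simp only [hV', Set.mem_preimage, inv_mul_cancel_left₀ hω0]
          exact hz₀.1
        · have h2 := hz₀.2
          simp only [mem_ball, dist_zero_right, norm_mul, hωabs,
            one_mul] at h2 ⊢
          exact h2
      have hsub : (fun z : ℂ => ω⁻¹ * z) '' connectedComponentIn (V' ∩ ball (0:ℂ) 1) (ω * z₀)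
          ⊆ connectedComponentIn (V ∩ ball (0:ℂ) 1) z₀ := by
        apply IsPreconnected.subset_connectedComponentIn
        · exact isPreconnected_connectedComponentIn.image _ hcont.continuousOn
        · exact ⟨ω * z₀, mem_connectedComponentIn hmem,
            by simp only [inv_mul_cancel_left₀ hω0]⟩
        · rintro z ⟨w, hw, rfl⟩
          exact hmaps w (connectedComponentIn_subset _ _ hw)
      intro z hz
      have hz' : ω⁻¹ * z ∈ connectedComponentIn (V ∩ ball (0:ℂ) 1) z₀ :=
        hsub ⟨z, hz, rfl⟩
      have hzD : ω⁻¹ * z ∈ ball (0:ℂ) 1 := (connectedComponentIn_subset _ _ hz').2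
      have hg2 := hrot (ω⁻¹ * z) hzD
      rw [mul_inv_cancel_left₀ hω0] at hg2
      calc g z = g (ω⁻¹ * z) := hg2
        _ = h (ω⁻¹ * z) := heq hz'
  have iter : ∀ n : ℕ, ∀ c ∈ sphere (0:ℂ) 1, ExtendsAcross g (ball (0:ℂ) 1) c →
      ExtendsAcross g (ball (0:ℂ) 1) (ω ^ n * c) := by
    intro n
    induction n with
    | zero => intro c _ hc; simpa using hc
    | succ n ih =>
      intro c hc hext
      have h1 := ih c hc hext
      have h2 : ω ^ n * c ∈ sphere (0:ℂ) 1 := by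
        simp only [mem_sphere_zero_iff_norm] at hc ⊢
        rw [norm_mul, norm_pow, hωabs, one_pow, one_mul, hc]
      have h3 := key _ h2 h1
      rwa [← mul_assoc, ← pow_succ'] at h3
  refine ⟨key, ?_⟩
  rintro ⟨b, hb, hnb⟩ α β hαβ
  have hπ : (0:ℝ) < Real.pi := Real.pi_pos
  have hm' : (0:ℝ) < (m:ℝ) := by exact_mod_cast hm
  have habs : ‖b‖ = 1 := by
    simpa only [mem_sphere_zero_iff_norm] using hb
  set φ := Complex.arg b with hφ
  have hbφ : Complex.exp ((φ:ℂ) * Complex.I) = b := by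
    have := Complex.norm_mul_exp_arg_mul_I b
    rwa [habs, Complex.ofReal_one, one_mul] at this
  set k : ℤ := ⌈(α - φ) * m / (2 * Real.pi)⌉ with hk
  set θ : ℝ := φ + 2 * Real.pi / m * k with hθ
  have hc : (0:ℝ) < 2 * Real.pi / m := by positivity
  have heq2 : 2 * Real.pi / m * ((α - φ) * m / (2 * Real.pi)) = α - φ := by
    field_simp
  have hθα : α ≤ θ := by
    have h1 : (α - φ) * m / (2 * Real.pi) ≤ (k:ℝ) := Int.le_ceil _
    have h2 := mul_le_mul_of_nonneg_left h1 hc.le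
    rw [heq2] at h2
    simp only [hθ]
    linarith
  have hθβ : θ ≤ β := by
    have h1 : (k:ℝ) < (α - φ) * m / (2 * Real.pi) + 1 := Int.ceil_lt_add_one _
    have h2 := mul_lt_mul_of_pos_left h1 hc
    rw [mul_add, heq2, mul_one] at h2
    simp only [hθ]
    linarith
  have hmne : (m:ℤ) ≠ 0 := by exact_mod_cast hm.ne'
  set j : ℕ := (k % (m:ℤ)).toNat with hjdef
  have hj : (j:ℤ) = k % (m:ℤ) := Int.toNat_of_nonneg (Int.emod_nonneg k hmne)
  have hjm : j < m := by
    have := Int.emod_lt_of_pos k (by exact_mod_cast hm : (0:ℤ) < (m:ℤ))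
    omega
  have hωm : ω ^ m = 1 := by
    rw [hωdef, ← Complex.exp_nat_mul]
    have hcalc : (m:ℂ) * (((2 * Real.pi / (m:ℝ) : ℝ) : ℂ) * Complex.I)
        = 2 * (Real.pi : ℂ) * Complex.I := by
      have hmc : (m:ℂ) ≠ 0 := by exact_mod_cast hm.ne'
      push_cast
      field_simp
    rw [hcalc, Complex.exp_two_pi_mul_I]
  have hωmz : ω ^ (m:ℤ) = 1 := by rw [zpow_natCast, hωm]
  have hzk : ω ^ k = ω ^ j := by
    have hdm : (m:ℤ) * (k / (m:ℤ)) + k % (m:ℤ) = k := Int.mul_ediv_add_emod k m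
    calc ω ^ k = ω ^ ((m:ℤ) * (k / (m:ℤ)) + k % (m:ℤ)) := by rw [hdm]
      _ = (ω ^ (m:ℤ)) ^ (k / (m:ℤ)) * ω ^ (k % (m:ℤ)) := by
          rw [zpow_add₀ hω0, zpow_mul]
      _ = ω ^ (k % (m:ℤ)) := by rw [hωmz, one_zpow, one_mul]
      _ = ω ^ (j:ℤ) := by rw [hj]
      _ = ω ^ j := zpow_natCast ω j
  have hexp : Complex.exp ((θ:ℝ) * Complex.I) = ω ^ j * b := by
    have hsplit : ((θ:ℝ):ℂ) * Complex.I
        = (k:ℂ) * (((2 * Real.pi / (m:ℝ) : ℝ):ℂ) * Complex.I) + (φ:ℂ) * Complex.I := by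
      rw [hθ]
      push_cast
      ring
    rw [hsplit, Complex.exp_add, Complex.exp_int_mul, hbφ, ← hωdef, hzk]
  refine ⟨θ, ⟨hθα, hθβ⟩, ?_⟩
  intro hext
  rw [hexp] at hext
  have hsph : ω ^ j * b ∈ sphere (0:ℂ) 1 := by
    simp only [mem_sphere_zero_iff_norm, norm_mul, norm_pow, hωabs,
      one_pow, one_mul, habs]
  have hfin := iter (m - j) _ hsph hext
  rw [← mul_assoc, ← pow_add, Nat.sub_add_cancel hjm.le, hωm, one_mul] at hfin
  exact hnb hfin
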